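/- arXiv:1709.03771 — 5 statements merged into one kernel-verified Lean document; each statement's English description precedes it below -/
import Mathlib

section
/- For every n ≥ 2, every complex root z of the trinomial G_n(X) = -1 + X + X^n satisfies 1 - 2(log n)/n ≤ |z| ≤ 1 + 2(log 2)/n. -/
/-- For every `n ≥ 2`, every complex root `z` of `-1 + X + X^n` satisfies
`1 - 2 log n / n ≤ |z| ≤ 1 + 2 log 2 / n`. -/
theorem stmt_3 (n : ℕ) (hn : 2 ≤ n) (z : ℂ) (hz : -1 + z + z ^ n = 0) :
    1 - 2 * Real.log n / n ≤ ‖z‖ ∧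
      ‖z‖ ≤ 1 + 2 * Real.log 2 / n := by
  have hzn : z ^ n = 1 - z := by linear_combination hz
  set r := ‖z‖ with hrdef
  have hr0 : 0 ≤ r := norm_nonneg z
  have hn2 : (2:ℝ) ≤ (n:ℝ) := by exact_mod_cast hn
  have hnpos : (0:ℝ) < (n:ℝ) := by linarith
  have habs : r ^ n = ‖1 - z‖ := by
    rw [hrdef, ← norm_pow, hzn]
  have hub : r ^ n ≤ 1 + r := by
    rw [habs]
    calc ‖1 - z‖ ≤ ‖(1:ℂ)‖ + ‖z‖ := by
          exact norm_sub_le 1 z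
    _ = 1 + r := by rw [hrdef]; norm_num
  have hlb : 1 - r ≤ r ^ n := by
    rw [habs]
    have : ‖(1:ℂ)‖ ≤ ‖(1:ℂ) - z‖ + ‖z‖ := by
      calc ‖(1:ℂ)‖ = ‖(1 - z) + z‖ := by ring_nf
      _ ≤ ‖(1:ℂ) - z‖ + ‖z‖ := norm_add_le _ _
    simp at this
    linarith
  have hL : (0.6931471803:ℝ) < Real.log 2 := Real.log_two_gt_d9
  have hL' : Real.log 2 < 0.6931471808 := Real.log_two_lt_d9
  constructor
  · -- lower bound
    by_contra hcon
    push_neg at hcon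
    set d := 2 * Real.log n / n with hddef
    have hlogn : Real.log 2 ≤ Real.log n := Real.log_le_log (by norm_num) hn2
    have hd0 : 0 < d := div_pos (by nlinarith) hnpos
    have hrd : r < 1 - d := hcon
    have hd1 : d < 1 := by nlinarith
    have h1 : r ^ n ≤ (1 - d) ^ n := pow_le_pow_left₀ hr0 hrd.le n
    have h2 : (1 - d) ^ n ≤ Real.exp (-d) ^ n :=
      pow_le_pow_left₀ (by linarith) (by linarith [Real.add_one_le_exp (-d)]) n
    have h3 : Real.exp (-d) ^ n = Real.exp (-(2 * Real.log n)) := by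
      rw [← Real.exp_nat_mul]
      congr 1
      rw [hddef]
      field_simp
    have h4 : Real.exp (-(2 * Real.log n)) = 1 / (n:ℝ)^2 := by
      rw [Real.exp_neg, two_mul, Real.exp_add, Real.exp_log hnpos]
      field_simp
    have h5 : 1 / (n:ℝ)^2 ≤ d := by
      rw [hddef, div_le_div_iff₀ (by positivity) hnpos]
      nlinarith
    linarith [hlb, h1, h2, h3.le, h3.ge, h4.le, h4.ge, h5, hrd]
  · -- upper bound
    by_contra hcon
    push_neg at hcon
    set c := 2 * Real.log 2 / n with hcdef
    have hc0 : 0 < c := by positivity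
    have hcm : c * n = 2 * Real.log 2 := by rw [hcdef]; field_simp
    have hcL : c ≤ Real.log 2 := by
      rw [hcdef, div_le_iff₀ hnpos]; nlinarith
    set a := (1:ℝ) + c with hadef
    have ha1 : (1:ℝ) < a := by linarith
    -- key : 1 + a < a ^ n
    have hcast : ((n - 2 : ℕ) : ℝ) = (n:ℝ) - 2 := by
      push_cast [Nat.cast_sub hn]; ring
    have h1 : 1 + ((n:ℝ) - 2) * c ≤ (1 + c) ^ (n - 2) := by
      rw [← hcast]; exact one_add_mul_le_pow (by linarith) (n-2)
    have hpow : a ^ n = a ^ 2 * a ^ (n - 2) := by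
      rw [← pow_add]; congr 1; omega
    have hkey : 1 + a < a ^ n := by
      rw [hpow]
      have h2 : a ^ 2 * (1 + ((n:ℝ) - 2) * c) ≤ a ^ 2 * a ^ (n-2) :=
        mul_le_mul_of_nonneg_left h1 (by positivity)
      have hexp : 1 + a < a ^ 2 * (1 + ((n:ℝ) - 2) * c) := by
        have e1 : ((n:ℝ) - 2) * c = 2 * Real.log 2 - 2 * c := by linear_combination hcm
        rw [hadef, e1]
        nlinarith [mul_nonneg hc0.le (sub_nonneg.2 hcL),
          mul_nonneg (mul_nonneg hc0.le hc0.le) (sub_nonneg.2 hcL),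
          mul_nonneg (sub_nonneg.2 hcL) (by linarith : (0:ℝ) ≤ 1 - Real.log 2)]
      linarith
    -- now derive contradiction
    have hA1 : 1 < a ^ (n-1) := by
      have hpow1 : a ^ n = a ^ (n-1) * a := by rw [← pow_succ]; congr 1; omega
      nlinarith [pow_pos (by linarith : (0:ℝ) < a) (n-1)]
    have hAR : a ^ (n-1) ≤ r ^ (n-1) := pow_le_pow_left₀ (by linarith) hcon.le (n-1)
    have hpow1 : a ^ n = a ^ (n-1) * a := by rw [← pow_succ]; congr 1; omega
    have hpow2 : r ^ n = r ^ (n-1) * r := by rw [← pow_succ]; congr 1; omega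
    have hApos : (0:ℝ) ≤ a ^ (n-1) := pow_nonneg (by linarith) _
    have s1 : a ^ (n-1) * r ≤ r ^ (n-1) * r := mul_le_mul_of_nonneg_right hAR hr0
    have s2 : 1 * (r - a) < a ^ (n-1) * (r - a) :=
      mul_lt_mul_of_pos_right hA1 (sub_pos.2 hcon)
    have s3 : a ^ (n-1) * r = a ^ (n-1) * a + a ^ (n-1) * (r - a) := by ring
    linarith [hpow1, hpow2, hkey, hub]
end

section
/- For n ≥ 2, the number θ_n^{-1}, where θ_n is the unique root of -1 + X + X^n in (0,1), is the dominant root of the polynomial G_n*(X) = 1 + X^{n-1} - X^n, and every other complex root of G_n* has modulus strictly less than θ_n^{-1}; in particular θ_n^{-1} is a Perron number. -/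
/-- For `n ≥ 2`, `θ_n⁻¹` (with `θ_n` the unique root of `-1 + X + X^n` in `(0,1)`)
is a root of `G_n*(X) = 1 + X^(n-1) - X^n`, every other complex root of `G_n*` has
modulus strictly smaller than `θ_n⁻¹`; moreover `θ_n⁻¹ > 1` is an algebraic integer,
hence a Perron number. -/
theorem stmt_4 (n : ℕ) (hn : 2 ≤ n) (θ : ℝ) (hθ : θ ∈ Set.Ioo (0 : ℝ) 1)
    (hroot : -1 + θ + θ ^ n = 0) :
    (1 + ((θ : ℂ)⁻¹) ^ (n - 1) - ((θ : ℂ)⁻¹) ^ n = 0) ∧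
      (∀ z : ℂ, 1 + z ^ (n - 1) - z ^ n = 0 → z ≠ (θ : ℂ)⁻¹ →
        ‖z‖ < θ⁻¹) ∧
      1 < θ⁻¹ ∧ IsIntegral ℤ θ⁻¹ := by
  obtain ⟨hθ0, hθ1⟩ := hθ
  obtain ⟨m, rfl⟩ : ∃ m, n = m + 1 := ⟨n - 1, by omega⟩
  have hm : 1 ≤ m := by omega
  have hθne : θ ≠ 0 := ne_of_gt hθ0
  have hsub : m + 1 - 1 = m := by omega
  rw [hsub]
  -- real key identity
  have e1 : (θ⁻¹) ^ (m + 1) * θ ^ (m + 1) = 1 := by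
    rw [← mul_pow, inv_mul_cancel₀ hθne, one_pow]
  have e2 : (θ⁻¹) ^ m = (θ⁻¹) ^ (m + 1) * θ := by
    rw [pow_succ]; field_simp
  have hkeyR : 1 + (θ⁻¹) ^ m - (θ⁻¹) ^ (m + 1) = 0 := by
    rw [e2, ← e1]; linear_combination (θ⁻¹) ^ (m + 1) * hroot
  have hkeyC : 1 + ((θ : ℂ)⁻¹) ^ m - ((θ : ℂ)⁻¹) ^ (m + 1) = 0 := by
    have := congrArg (Complex.ofReal) hkeyR
    push_cast at this
    simpa using this
  refine ⟨hkeyC, ?_, (one_lt_inv₀ hθ0).mpr hθ1, ?_⟩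
  · intro z hz hzne
    have hz0 : z ≠ 0 := by
      rintro rfl
      simp [zero_pow (show m ≠ 0 by omega)] at hz
    set w : ℂ := z⁻¹ with hw
    have hw0 : w ≠ 0 := inv_ne_zero hz0
    have hweq : w + w ^ (m + 1) = 1 := by
      rw [hw]
      have hzm : z ^ (m + 1) ≠ 0 := pow_ne_zero _ hz0
      have a : z⁻¹ * z = 1 := inv_mul_cancel₀ hz0
      have b : z⁻¹ ^ (m + 1) * z ^ (m + 1) = 1 := by rw [← mul_pow, a, one_pow]
      apply mul_right_cancel₀ hzm
      linear_combination z ^ m * a + b + hz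
    -- show θ < ‖w‖
    have htheq : θ + θ ^ (m + 1) = 1 := by linarith
    have hge : (1 : ℝ) ≤ ‖w‖ + ‖w‖ ^ (m + 1) := by
      calc (1 : ℝ) = ‖w + w ^ (m + 1)‖ := by rw [hweq]; simp
        _ ≤ ‖w‖ + ‖w ^ (m + 1)‖ := norm_add_le _ _
        _ = ‖w‖ + ‖w‖ ^ (m + 1) := by rw [norm_pow]
    have hwgt : θ < ‖w‖ := by
      by_contra hle
      push_neg at hle
      have hnorm_eq : ‖w‖ = θ := by
        rcases lt_or_eq_of_le hle with h | h
        · exfalso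
          have : ‖w‖ + ‖w‖ ^ (m + 1) < θ + θ ^ (m + 1) :=
            add_lt_add h (pow_lt_pow_left₀ h (norm_nonneg _) (by omega))
          linarith
        · exact h
      have heq : ‖w + w ^ (m + 1)‖ = ‖w‖ + ‖w ^ (m + 1)‖ := by
        rw [hweq, norm_pow, hnorm_eq]
        simpa using htheq.symm
      have hsr : SameRay ℝ w (w ^ (m + 1)) := sameRay_iff_norm_add.mpr heq
      obtain ⟨r, hr0, hrw⟩ := hsr.exists_nonneg_left hw0
      have hwre : (1 + r) • w = 1 := by
        rw [add_smul, one_smul, ← hweq, hrw]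
      have hr1 : (0:ℝ) < 1 + r := by linarith
      have hwv : w = (((1 + r)⁻¹ : ℝ) : ℂ) := by
        have := congrArg (fun t => ((1 + r)⁻¹ : ℝ) • t) hwre
        simp only [smul_smul, inv_mul_cancel₀ (ne_of_gt hr1), one_smul] at this
        rw [this, Complex.real_smul, mul_one]
      have hnw : ‖w‖ = (1 + r)⁻¹ := by
        rw [hwv, Complex.norm_real]
        exact abs_of_pos (inv_pos.mpr hr1)
      have hrθ : (1 + r)⁻¹ = θ := by rw [← hnorm_eq, hnw]
      have hwθ : w = (θ : ℂ) := by rw [hwv, hrθ]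
      exact hzne (by rw [← inv_inv z, ← hw, hwθ])
    have hwpos : 0 < ‖w‖ := lt_trans hθ0 hwgt
    have habs : ‖z‖ = ‖w‖⁻¹ := by
      rw [hw, norm_inv, inv_inv]
    rw [habs]
    exact inv_strictAnti₀ hθ0 hwgt
  · -- integrality
    refine ⟨Polynomial.X ^ (m + 1) - (Polynomial.X ^ m + Polynomial.C 1), ?_, ?_⟩
    · apply Polynomial.monic_X_pow_sub
      refine lt_of_le_of_lt (Polynomial.degree_add_le _ _) (max_lt ?_ ?_)
      · rw [Polynomial.degree_X_pow]
        exact_mod_cast Nat.lt_succ_self m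
      · exact lt_of_le_of_lt Polynomial.degree_C_le (by exact_mod_cast Nat.succ_pos m)
    · simp only [Polynomial.eval₂_sub, Polynomial.eval₂_add, Polynomial.eval₂_X_pow,
        Polynomial.eval₂_C]
      push_cast
      linarith [hkeyR]
end

section
/- For n ≥ 2 with n ≢ 5 (mod 6), the trinomial G_n(X) = -1 + X + X^n is irreducible over ℚ; for n ≡ 5 (mod 6), G_n(X) is divisible by X² - X + 1 and the quotient G_n(X)/(X² - X + 1) is irreducible over ℚ. -/
open Polynomial Polynomial.IsUnitTrinomial

namespace Sel5

theorem key_aux {n : ℕ} (hn : 2 ≤ n) (z : ℂ) (h1 : z ^ n + z - 1 = 0)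
    (h2 : 1 + z ^ (n - 1) - z ^ n = 0) : z ^ 2 = z - 1 ∧ n % 6 = 5 := by
  have hz0 : z ≠ 0 := by
    intro h
    rw [h, zero_pow (by omega : n ≠ 0)] at h1
    norm_num at h1
  have e1 : z ^ n = 1 - z := by linear_combination h1
  have e2 : z ^ (n - 1) = z ^ n - 1 := by linear_combination h2
  have hzn : z ^ n = z * z ^ (n - 1) := by
    rw [← pow_succ']
    congr 1
    omega
  have e3 : z ^ 2 = z - 1 := by
    have : z * z ^ (n - 1) = 1 - z := by rw [← hzn, e1]
    rw [e2, e1] at this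
    linear_combination -this
  refine ⟨e3, ?_⟩
  have z3 : z ^ 3 = -1 := by linear_combination (z + 1) * e3
  have z6 : z ^ 6 = 1 := by linear_combination (z ^ 3 - 1) * z3
  have hne : z ^ n = z ^ (n % 6) := by
    conv_lhs => rw [← Nat.div_add_mod n 6]
    rw [pow_add, pow_mul, z6, one_pow, one_mul]
  have e4 : z ^ (n % 6) = 1 - z := by rw [← hne, e1]
  have h6 : n % 6 = 0 ∨ n % 6 = 1 ∨ n % 6 = 2 ∨ n % 6 = 3 ∨ n % 6 = 4 ∨ n % 6 = 5 := by omega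
  rcases h6 with h | h | h | h | h | h <;> rw [h] at e4
  · exact absurd (by linear_combination e4) hz0
  · exact absurd (by linear_combination (4/3 : ℂ) * e3 + (-2*z/3 + 1/3) * e4) (one_ne_zero (α := ℂ))
  · exact absurd (by linear_combination (1 + z/2) * e3 - (z/2) * e4) (one_ne_zero (α := ℂ))
  · exact absurd (by linear_combination (1/3 : ℂ) * e3 - ((z+1)/3) * e4 + ((z+1)/3) * z3)
      (one_ne_zero (α := ℂ))
  · exact absurd (by linear_combination -e4 + z * z3) (one_ne_zero (α := ℂ))
  · exact h

theorem phi_dvd (k : ℕ) : (X ^ 2 - X + 1 : ℤ[X]) ∣ (X ^ (6 * k + 5) + X - 1) := by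
  induction k with
  | zero => exact ⟨X ^ 3 + X ^ 2 - 1, by norm_num; ring⟩
  | succ k ih =>
    obtain ⟨c, hc⟩ := ih
    refine ⟨X ^ 6 * c - (X - 1) * (X + 1) * (X ^ 3 - 1), ?_⟩
    rw [show 6 * (k + 1) + 5 = (6 * k + 5) + 6 by ring, pow_add]
    linear_combination (X : ℤ[X]) ^ 6 * hc


/-- Classification of `q` with `p * p.mirror = q * q.mirror` for unit trinomials,
extracted from the proof of `Polynomial.IsUnitTrinomial.irreducible_of_coprime`. -/
theorem classify {p q : ℤ[X]} (hp : p.IsUnitTrinomial)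
    (hpq : p * p.mirror = q * q.mirror) :
    q = p ∨ q = -p ∨ q = p.mirror ∨ q = -p.mirror := by
  have hq : IsUnitTrinomial q := (isUnitTrinomial_iff'' hpq).mp hp
  obtain ⟨k, m, n, hkm, hmn, u, v, w, hp⟩ := hp
  obtain ⟨k', m', n', hkm', hmn', x, y, z, hq⟩ := hq
  have hk : k = k' := by
    rw [← mul_right_inj' (show 2 ≠ 0 from two_ne_zero), ←
      trinomial_natTrailingDegree hkm hmn u.ne_zero, ← hp, ← natTrailingDegree_mul_mirror, hpq,
      natTrailingDegree_mul_mirror, hq, trinomial_natTrailingDegree hkm' hmn' x.ne_zero]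
  have hn : n = n' := by
    rw [← mul_right_inj' (show 2 ≠ 0 from two_ne_zero), ← trinomial_natDegree hkm hmn w.ne_zero, ←
      hp, ← natDegree_mul_mirror, hpq, natDegree_mul_mirror, hq,
      trinomial_natDegree hkm' hmn' z.ne_zero]
  subst hk
  subst hn
  rcases eq_or_eq_neg_of_sq_eq_sq (y : ℤ) (v : ℤ)
      ((Int.isUnit_sq y.isUnit).trans (Int.isUnit_sq v.isUnit).symm) with
    (h1 | h1)
  · rw [h1] at hq
    rcases irreducible_aux3 hkm hmn hkm' hmn' u v w x z hp hq hpq with (h2 | h2)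
    · exact Or.inl h2
    · exact Or.inr (Or.inr (Or.inl h2))
  · rw [h1] at hq
    rw [trinomial_def] at hp
    rw [← neg_inj, neg_add, neg_add, ← neg_mul, ← neg_mul, ← neg_mul, ← C_neg, ← C_neg, ← C_neg]
      at hp
    rw [← neg_mul_neg, ← mirror_neg] at hpq
    rcases irreducible_aux3 hkm hmn hkm' hmn' (-u) (-v) (-w) x z hp hq hpq with (rfl | rfl)
    · exact Or.inr (Or.inl rfl)
    · exact Or.inr (Or.inr (Or.inr p.mirror_neg))



theorem Ptri {n : ℕ} (hn : 2 ≤ n) :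
    (X ^ n + X - 1 : ℤ[X]) = trinomial 0 1 n (-1 : ℤ) 1 1 := by
  simp only [trinomial, C_neg, C_1]; ring



theorem Punit {n : ℕ} (hn : 2 ≤ n) : (X ^ n + X - 1 : ℤ[X]).IsUnitTrinomial :=
  ⟨0, 1, n, zero_lt_one, by omega, -1, 1, 1, by rw [Ptri hn]; norm_num⟩

theorem Pmirror {n : ℕ} (hn : 2 ≤ n) :
    (X ^ n + X - 1 : ℤ[X]).mirror = 1 + X ^ (n - 1) - X ^ n := by
  rw [Ptri hn, trinomial_mirror zero_lt_one (by omega) (by norm_num) one_ne_zero]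
  simp only [trinomial, C_neg, C_1, Nat.add_zero]; ring

theorem phitri : (X ^ 2 - X + 1 : ℤ[X]) = trinomial 0 1 2 (1 : ℤ) (-1) 1 := by
  simp only [trinomial, C_neg, C_1]; ring

theorem phi_monic : (X ^ 2 - X + 1 : ℤ[X]).Monic := by
  rw [phitri]; exact trinomial_monic zero_lt_one one_lt_two

theorem phi_mirror : (X ^ 2 - X + 1 : ℤ[X]).mirror = X ^ 2 - X + 1 := by
  rw [phitri, trinomial_mirror zero_lt_one one_lt_two one_ne_zero one_ne_zero]
  norm_num [trinomial]

theorem P_monic {n : ℕ} (hn : 2 ≤ n) : (X ^ n + X - 1 : ℤ[X]).Monic := by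
  rw [Ptri hn]; exact trinomial_monic zero_lt_one (by omega)

theorem P_natDegree {n : ℕ} (hn : 2 ≤ n) : (X ^ n + X - 1 : ℤ[X]).natDegree = n := by
  rw [Ptri hn]; exact trinomial_natDegree zero_lt_one (by omega) one_ne_zero

theorem irr_quot_int {n : ℕ} (hn : 2 ≤ n) (h5 : n % 6 = 5) (q : ℤ[X])
    (hq : (X ^ n + X - 1 : ℤ[X]) = (X ^ 2 - X + 1) * q) : Irreducible q := by
  have hn5 : 5 ≤ n := by omega
  have hφne : (X ^ 2 - X + 1 : ℤ[X]) ≠ 0 := phi_monic.ne_zero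
  have hqmon : q.Monic := phi_monic.of_mul_monic_left (by rw [← hq]; exact P_monic hn)
  have hqne : q ≠ 0 := hqmon.ne_zero
  have hφdeg : (X ^ 2 - X + 1 : ℤ[X]).natDegree = 2 := by
    rw [phitri]; exact trinomial_natDegree zero_lt_one one_lt_two one_ne_zero
  have hdeg : q.natDegree = n - 2 := by
    have h := congrArg natDegree hq
    rw [natDegree_mul hφne hqne, P_natDegree hn, hφdeg] at h
    omega
  constructor
  · intro hu
    have := natDegree_eq_zero_of_isUnit hu
    omega
  · intro f g hfg
    by_contra hcon
    push_neg at hcon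
    obtain ⟨hf, hg⟩ := hcon
    have hfg1 : f.leadingCoeff * g.leadingCoeff = 1 := by
      rw [← leadingCoeff_mul, ← hfg]; exact hqmon
    have hfu : IsUnit f.leadingCoeff := IsUnit.of_mul_eq_one _ hfg1
    have hgu : IsUnit g.leadingCoeff := IsUnit.of_mul_eq_one _ (by rwa [mul_comm] at hfg1)
    have hfne : f ≠ 0 := fun h => by simp [h] at hfg1
    have hgne : g ≠ 0 := fun h => by simp [h] at hfg1
    have keydeg : ∀ r : ℤ[X], IsUnit r.leadingCoeff → ¬ IsUnit r → 0 < r.natDegree := by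
      intro r hr hnr
      rcases Nat.eq_zero_or_pos r.natDegree with h0 | h
      · exact absurd (by
          rw [eq_C_of_natDegree_eq_zero h0]
          exact isUnit_C.mpr (by rwa [leadingCoeff, h0] at hr)) hnr
      · exact h
    have hfdeg : 0 < f.natDegree := keydeg f hfu hf
    have hgdeg : 0 < g.natDegree := keydeg g hgu hg
    have hPfg : (X ^ n + X - 1 : ℤ[X]) = (X ^ 2 - X + 1) * (f * g) := by rw [hq, hfg]
    -- the mirror-product trick
    have hmm : (X ^ n + X - 1 : ℤ[X]) * (X ^ n + X - 1 : ℤ[X]).mirror =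
        ((X ^ 2 - X + 1) * f * g.mirror) * ((X ^ 2 - X + 1) * f * g.mirror).mirror := by
      rw [hPfg, mirror_mul_of_domain, mirror_mul_of_domain, mirror_mul_of_domain,
        mirror_mul_of_domain, mirror_mirror, phi_mirror]
      ring
    have hclass := classify (Punit hn) hmm
    -- extract a self-(anti)mirror nonconstant factor `u` of `q`
    have main : ∃ u : ℤ[X], u ∣ q ∧ 0 < u.natDegree ∧ (u.mirror = u ∨ u.mirror = -u) := by
      rcases hclass with h | h | h | h
      · refine ⟨g, Dvd.intro_left f hfg.symm, hgdeg, Or.inl ?_⟩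
        rw [hPfg] at h
        exact mul_left_cancel₀ (mul_ne_zero hφne hfne)
          (show ((X ^ 2 - X + 1) * f) * g.mirror = ((X ^ 2 - X + 1) * f) * g by
            linear_combination h)
      · refine ⟨g, Dvd.intro_left f hfg.symm, hgdeg, Or.inr ?_⟩
        rw [hPfg] at h
        exact mul_left_cancel₀ (mul_ne_zero hφne hfne)
          (show ((X ^ 2 - X + 1) * f) * g.mirror = ((X ^ 2 - X + 1) * f) * (-g) by
            linear_combination h)
      · refine ⟨f, Dvd.intro g hfg.symm, hfdeg, Or.inl ?_⟩
        rw [hPfg, mirror_mul_of_domain, mirror_mul_of_domain, phi_mirror] at h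
        have hgm : g.mirror ≠ 0 := mirror_eq_zero.not.mpr hgne
        have hc := mul_right_cancel₀ hgm
          (show ((X ^ 2 - X + 1) * f) * g.mirror = ((X ^ 2 - X + 1) * f.mirror) * g.mirror by
            linear_combination h)
        have := mul_left_cancel₀ hφne hc
        linear_combination -this
      · refine ⟨f, Dvd.intro g hfg.symm, hfdeg, Or.inr ?_⟩
        rw [hPfg, mirror_mul_of_domain, mirror_mul_of_domain, phi_mirror] at h
        have hgm : g.mirror ≠ 0 := mirror_eq_zero.not.mpr hgne
        have hc := mul_right_cancel₀ hgm
          (show ((X ^ 2 - X + 1) * f) * g.mirror = ((X ^ 2 - X + 1) * (-f.mirror)) * g.mirror by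
            linear_combination h)
        have := mul_left_cancel₀ hφne hc
        linear_combination this
    obtain ⟨u, huq, hudeg, hum⟩ := main
    -- complex root of u
    have hdegpos : 0 < (u.map (algebraMap ℤ ℂ)).degree := by
      rw [degree_map_eq_of_injective (algebraMap ℤ ℂ).injective_int]
      exact natDegree_pos_iff_degree_pos.mp hudeg
    obtain ⟨z, hz⟩ := Complex.exists_root hdegpos
    rw [IsRoot, eval_map, ← aeval_def] at hz
    have hq0 : aeval z q = 0 := by
      obtain ⟨v, hv⟩ := huq
      rw [hv, map_mul, hz, zero_mul]
    have hP0 : (aeval z) (X ^ n + X - 1 : ℤ[X]) = 0 := by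
      rw [hq, map_mul, hq0, mul_zero]
    have huP : u ∣ (X ^ n + X - 1 : ℤ[X]) := huq.trans ⟨X ^ 2 - X + 1, by rw [hq]; ring⟩
    have humir : u ∣ (X ^ n + X - 1 : ℤ[X]).mirror := by
      obtain ⟨w, hw⟩ := huP
      rw [hw, mirror_mul_of_domain]
      rcases hum with h | h
      · exact dvd_mul_of_dvd_left (dvd_of_eq h.symm) _
      · exact dvd_mul_of_dvd_left ⟨-1, by rw [h]; ring⟩ _
    have hPm0 : (aeval z) (X ^ n + X - 1 : ℤ[X]).mirror = 0 := by
      obtain ⟨w, hw⟩ := humir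
      rw [hw, map_mul, hz, zero_mul]
    -- turn into equations
    rw [Pmirror hn] at hPm0
    simp only [map_add, map_sub, map_one, map_pow, aeval_X] at hP0 hPm0
    obtain ⟨hz2, -⟩ := key_aux hn z hP0 hPm0
    -- phi(z) = 0
    have hφ0 : (aeval z) (X ^ 2 - X + 1 : ℤ[X]) = 0 := by
      simp only [map_add, map_sub, map_one, map_pow, aeval_X]
      linear_combination hz2
    -- derivative at z
    have hder : (aeval z) (derivative (X ^ n + X - 1 : ℤ[X])) = 0 := by
      rw [hq, derivative_mul, map_add, map_mul, map_mul, hφ0, hq0, mul_zero, zero_mul,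
        add_zero]
    have hD : (n : ℂ) * z ^ (n - 1) + 1 = 0 := by
      have : derivative (X ^ n + X - 1 : ℤ[X]) = C (n : ℤ) * X ^ (n - 1) + 1 := by
        rw [derivative_sub, derivative_add, derivative_X_pow, derivative_X, derivative_one]
        ring
      rw [this] at hder
      simpa using hder
    -- z^(n-1) = -z
    have z3 : z ^ 3 = -1 := by linear_combination (z + 1) * hz2
    have z6 : z ^ 6 = 1 := by linear_combination (z ^ 3 - 1) * z3
    have hmod : n - 1 = 6 * ((n - 1) / 6) + 4 := by omega
    have hzn1 : z ^ (n - 1) = -z := by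
      rw [hmod, pow_add, pow_mul, z6, one_pow, one_mul]
      linear_combination (z ^ 2 + z) * hz2
    rw [hzn1] at hD
    have hnz : (n : ℂ) * z = 1 := by linear_combination -hD
    have hfin : ((n : ℂ)) ^ 2 - n + 1 = 0 := by
      linear_combination ((n : ℂ)) ^ 2 * hz2 + (-(n : ℂ) * z + (n : ℂ) - 1) * hnz
    have hint : ((n : ℤ)) ^ 2 - n + 1 = 0 := by exact_mod_cast hfin
    nlinarith [hint, sq_nonneg ((n : ℤ) - 1)]

theorem irr_int {n : ℕ} (hn : 2 ≤ n) (h5 : n % 6 ≠ 5) :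
    Irreducible (X ^ n + X - 1 : ℤ[X]) := by
  apply IsUnitTrinomial.irreducible_of_coprime' (Punit hn)
  rintro z ⟨hz1, hz2⟩
  rw [Pmirror hn] at hz2
  simp only [map_add, map_sub, map_one, map_pow, aeval_X] at hz1 hz2
  exact h5 (key_aux hn z hz1 hz2).2

end Sel5

open Sel5 in
/-- For `n ≥ 2` with `n ≢ 5 (mod 6)`, the trinomial `-1 + X + X^n` is irreducible
over `ℚ`; for `n ≡ 5 (mod 6)` it is divisible by `X² - X + 1` and the quotient is
irreducible over `ℚ`. -/
theorem stmt_5 (n : ℕ) (hn : 2 ≤ n) :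
    (n % 6 ≠ 5 → Irreducible (-1 + X + X ^ n : Polynomial ℚ)) ∧
      (n % 6 = 5 →
        ((X ^ 2 - X + 1 : Polynomial ℚ) ∣ (-1 + X + X ^ n) ∧
          Irreducible ((-1 + X + X ^ n : Polynomial ℚ) / (X ^ 2 - X + 1)))) := by
  have e : (-1 + X + X ^ n : Polynomial ℚ) = X ^ n + X - 1 := by ring
  constructor
  · intro h5
    have h := (IsPrimitive.Int.irreducible_iff_irreducible_map_cast
        ((P_monic hn).isPrimitive)).mp (irr_int hn h5)
    rw [Polynomial.map_sub, Polynomial.map_add, Polynomial.map_pow, Polynomial.map_one,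
      Polynomial.map_X] at h
    rwa [e]
  · intro h5
    obtain ⟨q, hq⟩ := phi_dvd ((n - 5) / 6)
    rw [show 6 * ((n - 5) / 6) + 5 = n by omega] at hq
    have hqmon : q.Monic := phi_monic.of_mul_monic_left (by rw [← hq]; exact P_monic hn)
    have hmap := congrArg (map (Int.castRingHom ℚ)) hq
    simp only [Polynomial.map_mul, Polynomial.map_sub, Polynomial.map_add, Polynomial.map_pow,
      Polynomial.map_one, Polynomial.map_X] at hmap
    have hφQ : (X ^ 2 - X + 1 : Polynomial ℚ) ≠ 0 := fun h0 => by
      have := congrArg (eval 0) h0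
      simp at this
    constructor
    · rw [e, hmap]
      exact Dvd.intro _ rfl
    · rw [e, hmap, mul_div_cancel_left₀ _ hφQ]
      exact (IsPrimitive.Int.irreducible_iff_irreducible_map_cast
        hqmon.isPrimitive).mp (irr_quot_int hn h5 q hq)
end

section
/- Let n ≥ 2. A real number β ∈ (1, (1+√5)/2] belongs to the interval [θ_{n+1}^{-1}, θ_n^{-1}) if and only if the Rényi β-expansion of 1 has the form d_β(1) = 0.1 0^{n-1} 1 0^{n_1} 1 0^{n_2} 1 ... with every gap length n_k ≥ n - 1. -/
private lemma pow_sub_pow_lt_aux {a b : ℝ} (k : ℕ) (ha : 1 ≤ a) (hab : a < b) :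
    a ^ (k+1) - a ^ k < b ^ (k+1) - b ^ k := by
  have h1 : a ^ k ≤ b ^ k := pow_le_pow_left₀ (by linarith) hab.le k
  have h2 : (0:ℝ) < b ^ k := pow_pos (by linarith) k
  have h3 : a ^ (k+1) = a ^ k * a := pow_succ a k
  have h4 : b ^ (k+1) = b ^ k * b := pow_succ b k
  nlinarith

set_option maxHeartbeats 2000000 in
/-- Let `n ≥ 2`, and let `θ_n`, `θ_{n+1}` be the unique roots in `(0,1)` of
`-1 + X + X^n`, `-1 + X + X^(n+1)` respectively. A real `β ∈ (1, (1+√5)/2]` belongs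
to `[θ_{n+1}⁻¹, θ_n⁻¹)` if and only if the Rényi β-expansion of 1 has the form
`0.1 0^(n-1) 1 0^(n_1) 1 0^(n_2) 1 ...` with every gap `n_k ≥ n-1` (equivalently:
`t_1 = 1`, `t_i = 0` for `2 ≤ i ≤ n`, `t_{n+1} = 1`, and any two indices carrying
digit 1 differ by at least `n`). -/
theorem stmt_10 (n : ℕ) (hn : 2 ≤ n) (θn θn1 : ℝ)
    (hθn : θn ∈ Set.Ioo (0 : ℝ) 1) (hθnroot : -1 + θn + θn ^ n = 0)
    (hθn1 : θn1 ∈ Set.Ioo (0 : ℝ) 1) (hθn1root : -1 + θn1 + θn1 ^ (n + 1) = 0)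
    (β : ℝ) (hβ1 : 1 < β) (hβ2 : β ≤ (1 + Real.sqrt 5) / 2) :
    (θn1⁻¹ ≤ β ∧ β < θn⁻¹) ↔
      (let t : ℕ → ℤ := fun i => ⌊β * (fun x => Int.fract (β * x))^[i - 1] 1⌋
       t 1 = 1 ∧ (∀ i, 2 ≤ i → i ≤ n → t i = 0) ∧ t (n + 1) = 1 ∧
         ∀ i j, 1 ≤ i → i < j → t i = 1 → t j = 1 → n ≤ j - i) := by
  obtain ⟨m, rfl⟩ : ∃ m, n = m + 2 := ⟨n - 2, by omega⟩
  obtain ⟨hθ0, hθ1⟩ := hθn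
  obtain ⟨hθ0', hθ1'⟩ := hθn1
  have hβ2' : β < 2 := by
    have h5 : Real.sqrt 5 < 3 := by
      nlinarith [Real.sq_sqrt (show (0:ℝ) ≤ 5 by norm_num), Real.sqrt_nonneg 5]
    linarith
  set F : ℝ → ℝ := fun x => Int.fract (β * x) with hF
  -- basic facts about iterates
  have hXs : ∀ i : ℕ, F^[i+1] 1 = Int.fract (β * F^[i] 1) := by
    intro i; rw [Function.iterate_succ_apply']
  have hXnn : ∀ i : ℕ, 0 ≤ F^[i] 1 := by
    intro i
    cases i with
    | zero => norm_num
    | succ j => rw [hXs]; exact Int.fract_nonneg _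
  have hXle : ∀ i : ℕ, F^[i] 1 ≤ 1 := by
    intro i
    cases i with
    | zero => norm_num
    | succ j => rw [hXs]; exact (Int.fract_lt_one _).le
  have hXlt : ∀ i : ℕ, F^[i+1] 1 < 1 := by
    intro i; rw [hXs]; exact Int.fract_lt_one _
  have hrec : ∀ i : ℕ, F^[i+1] 1 = β * F^[i] 1 - ⌊β * F^[i] 1⌋ := by
    intro i; rw [hXs]; rfl
  -- monotone growth of β^k(β-1)
  have hpmono : ∀ j k : ℕ, j ≤ k → β ^ j ≤ β ^ k := fun j k h =>
    pow_le_pow_right₀ hβ1.le h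
  have hgrow : ∀ j k : ℕ, j ≤ k → β ^ (j+1) - β ^ j ≤ β ^ (k+1) - β ^ k := by
    intro j k hjk
    have h1 : β ^ j ≤ β ^ k := hpmono j k hjk
    have h2 : β ^ (j+1) = β ^ j * β := pow_succ β j
    have h3 : β ^ (k+1) = β ^ k * β := pow_succ β k
    nlinarith
  have hpnn : ∀ k : ℕ, (0:ℝ) ≤ β ^ (k+1) - β ^ k := by
    intro k
    have h1 : β ^ k ≤ β ^ (k+1) := hpmono k (k+1) (by omega)
    linarith
  -- root identities for the inverses
  have hrootn : (θn⁻¹) ^ (m+2) - (θn⁻¹) ^ (m+1) = 1 := by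
    have h : θn ^ (m+2) = 1 - θn := by linarith
    have hne : θn ≠ 0 := ne_of_gt hθ0
    have hi : θn⁻¹ * θn = 1 := inv_mul_cancel₀ hne
    rw [show (θn⁻¹)^(m+2) - (θn⁻¹)^(m+1) = (θn⁻¹)^(m+2) * θn^(m+2) by
      rw [h, pow_succ θn⁻¹ (m+1)]; linear_combination (θn⁻¹)^(m+1) * hi]
    rw [← mul_pow, hi, one_pow]
  have hrootn1 : (θn1⁻¹) ^ (m+3) - (θn1⁻¹) ^ (m+2) = 1 := by
    have h : θn1 ^ (m+3) = 1 - θn1 := by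
      have : θn1 ^ (m+2+1) = 1 - θn1 := by linarith
      convert this using 2
    have hne : θn1 ≠ 0 := ne_of_gt hθ0'
    have hi : θn1⁻¹ * θn1 = 1 := inv_mul_cancel₀ hne
    rw [show (θn1⁻¹)^(m+3) - (θn1⁻¹)^(m+2) = (θn1⁻¹)^(m+3) * θn1^(m+3) by
      rw [h, pow_succ θn1⁻¹ (m+2)]; linear_combination (θn1⁻¹)^(m+2) * hi]
    rw [← mul_pow, hi, one_pow]
  have hθninv : 1 < θn⁻¹ := (one_lt_inv₀ hθ0).mpr hθ1
  have hθn1inv : 1 < θn1⁻¹ := (one_lt_inv₀ hθ0').mpr hθ1'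
  have key2 : β < θn⁻¹ ↔ β ^ (m+2) - β ^ (m+1) < 1 := by
    constructor
    · intro h
      have := pow_sub_pow_lt_aux (m+1) hβ1.le h
      linarith [hrootn]
    · intro h
      by_contra hc
      push_neg at hc
      rcases eq_or_lt_of_le hc with he | hl
      · rw [he] at hrootn; linarith
      · have := pow_sub_pow_lt_aux (m+1) hθninv.le hl
        linarith
  have key1 : θn1⁻¹ ≤ β ↔ 1 ≤ β ^ (m+3) - β ^ (m+2) := by
    constructor
    · intro h
      rcases eq_or_lt_of_le h with he | hl
      · rw [← he]; linarith [hrootn1]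
      · have := pow_sub_pow_lt_aux (m+2) hθn1inv.le hl
        linarith [hrootn1]
    · intro h
      by_contra hc
      push_neg at hc
      have := pow_sub_pow_lt_aux (m+2) hβ1.le hc
      linarith [hrootn1]
  rw [and_congr key1 key2]
  dsimp only
  simp only [Nat.add_sub_cancel, Nat.sub_self]
  constructor
  · rintro ⟨hA, hB⟩
    have ht1 : ⌊β * F^[0] 1⌋ = 1 := by
      simp only [Function.iterate_zero, id_eq, mul_one]
      rw [Int.floor_eq_iff] <;> push_cast
      constructor <;> linarith
    have hval : ∀ k, k ≤ m + 1 → F^[k+1] 1 = β ^ (k+1) - β ^ k := by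
      intro k
      induction k with
      | zero =>
        intro _
        rw [hXs]
        simp only [Function.iterate_zero, id_eq, mul_one]
        have : Int.fract β = β - ⌊β⌋ := rfl
        rw [this]
        have hb : ⌊β⌋ = 1 := by
          rw [Int.floor_eq_iff] <;> push_cast
          constructor <;> linarith
        rw [hb]
        push_cast
        ring
      | succ j ih =>
        intro hj
        have hv := ih (by omega)
        rw [hXs, hv]
        have h1 : β * (β ^ (j+1) - β ^ j) = β ^ (j+2) - β ^ (j+1) := by ring
        rw [h1, Int.fract_eq_self.mpr ⟨hpnn (j+1), ?_⟩]
        have := hgrow (j+1) (m+1) (by omega)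
        linarith
    have hzero : ∀ i, 2 ≤ i → i ≤ m+2 → ⌊β * F^[i-1] 1⌋ = 0 := by
      intro i h2 hle
      obtain ⟨k, rfl⟩ : ∃ k, i = k + 2 := ⟨i - 2, by omega⟩
      have hv := hval k (by omega)
      have hidx : k + 2 - 1 = k + 1 := rfl
      rw [hidx, hv]
      have h1 : β * (β ^ (k+1) - β ^ k) = β ^ (k+2) - β ^ (k+1) := by ring
      rw [h1]
      rw [Int.floor_eq_iff] <;> push_cast
      refine ⟨hpnn (k+1), ?_⟩
      have := hgrow (k+1) (m+1) (by omega)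
      linarith
    have htn1 : ⌊β * F^[m+2] 1⌋ = 1 := by
      have hv := hval (m+1) le_rfl
      rw [show m + 2 = (m+1)+1 from rfl, hv]
      rw [show β * (β ^ (m+2) - β ^ (m+1)) = β ^ (m+3) - β ^ (m+2) by ring]
      rw [Int.floor_eq_iff] <;> push_cast
      constructor
      · linarith
      · have h2 : β ^ (m+3) = β ^ (m+2) * β := pow_succ β (m+2)
        have h3 : β ^ (m+2) = β ^ (m+1) * β := pow_succ β (m+1)
        nlinarith
    have hsep : ∀ i, 1 ≤ i → ⌊β * F^[i-1] 1⌋ = 1 → ∀ kk, kk ≤ m →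
        F^[i+kk] 1 ≤ β ^ (kk+1) - β ^ kk ∧ ⌊β * F^[i+kk] 1⌋ = 0 := by
      intro i h1i hti
      obtain ⟨p, rfl⟩ : ∃ p, i = p + 1 := ⟨i - 1, by omega⟩
      have hidx : p + 1 - 1 = p := rfl
      rw [hidx] at hti
      intro kk
      induction kk with
      | zero =>
        intro _
        simp only [Nat.add_zero]
        have hr := hrec p
        rw [hti] at hr
        push_cast at hr
        have hx : F^[p+1] 1 ≤ β - 1 := by
          have := hXle p
          rw [hr]; nlinarith
        constructor
        · simpa using hx
        · rw [Int.floor_eq_iff] <;> push_cast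
          constructor
          · exact mul_nonneg (by linarith) (hXnn (p+1))
          · have h2 : β * F^[p+1] 1 ≤ β * (β - 1) := by nlinarith [hXnn (p+1)]
            have h3 : β * (β - 1) = β ^ (1+1) - β ^ 1 := by ring
            have h4 := hgrow 1 (m+1) (by omega)
            simp only [pow_one] at h3 h4 ⊢
            linarith
      | succ q ih =>
        intro hq
        obtain ⟨hxq, htq⟩ := ih (by omega)
        have hr := hrec (p+1+q)
        rw [htq] at hr
        push_cast at hr
        have hx2 : F^[p+1+(q+1)] 1 ≤ β ^ (q+2) - β ^ (q+1) := by
          rw [show p+1+(q+1) = (p+1+q)+1 from rfl, hr]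
          have h2 : β ^ (q+2) = β ^ (q+1) * β := pow_succ β (q+1)
          have h3 : β ^ (q+1) = β ^ q * β := pow_succ β q
          nlinarith
        refine ⟨hx2, ?_⟩
        rw [Int.floor_eq_iff] <;> push_cast
        constructor
        · exact mul_nonneg (by linarith) (hXnn (p+1+(q+1)))
        · have h2 : β * F^[p+1+(q+1)] 1 ≤ β * (β ^ (q+2) - β ^ (q+1)) := by
            nlinarith [hXnn (p+1+(q+1))]
          have h3 : β * (β ^ (q+2) - β ^ (q+1)) = β ^ (q+3) - β ^ (q+2) := by ring
          have h4 := hgrow (q+2) (m+1) (by omega)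
          nlinarith
    refine ⟨by simpa using ht1, hzero, htn1, ?_⟩
    intro i j h1i hij hti htj
    by_contra hc
    push_neg at hc
    have hk : ∃ k, k ≤ m ∧ j = i + k + 1 := ⟨j - i - 1, by omega, by omega⟩
    obtain ⟨k, hkm, rfl⟩ := hk
    have := (hsep i h1i hti k hkm).2
    have hidx : i + k + 1 - 1 = i + k := rfl
    rw [hidx] at htj
    omega
  · rintro ⟨ht1, h0, hn1, -⟩
    have hb : ⌊β⌋ = 1 := by simpa using ht1
    have hval : ∀ k, k ≤ m + 1 → F^[k+1] 1 = β ^ (k+1) - β ^ k := by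
      intro k
      induction k with
      | zero =>
        intro _
        rw [hXs]
        simp only [Function.iterate_zero, id_eq, mul_one]
        have : Int.fract β = β - ⌊β⌋ := rfl
        rw [this, hb]
        push_cast; ring
      | succ j ih =>
        intro hj
        have hv := ih (by omega)
        have htj : ⌊β * F^[j+2-1] 1⌋ = 0 := h0 (j+2) (by omega) (by omega)
        rw [show j+2-1 = j+1 from rfl] at htj
        have hr := hrec (j+1)
        rw [htj] at hr
        push_cast at hr
        rw [show j+1+1 = (j+1)+1 from rfl, hr, hv]
        ring
    have hx := hval (m+1) le_rfl
    rw [show (m+1)+1 = m+2 from rfl] at hx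
    constructor
    · have hfl := Int.floor_le (β * F^[m+2] 1)
      rw [hn1] at hfl
      push_cast at hfl
      rw [hx] at hfl
      have h2 : β ^ (m+3) = β ^ (m+2) * β := pow_succ β (m+2)
      have h3 : β ^ (m+2) = β ^ (m+1) * β := pow_succ β (m+1)
      nlinarith
    · have hlt := hXlt (m+1)
      rw [show (m+1)+1 = m+2 from rfl, hx] at hlt
      linarith
end

section
/- Let β > 1 be a real number with 1 < β < θ_6^{-1} and let n = dyg(β) be its dynamical degree, i.e. the unique integer n ≥ 7 with θ_n^{-1} ≤ β < θ_{n-1}^{-1}. Then for n large enough, β ≥ θ_n^{-1} ≥ 1 + (log n)(1 - (log log n)/(log n))/n; in particular the house of any algebraic integer α with dyg(α) = n ≥ 260 satisfies house(α) ≥ 1 + (log n - log log n)/n. -/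
/-- Let `β` be real with dynamical degree `n = dyg(β) ≥ 260`, i.e.
`θ_n⁻¹ ≤ β < θ_{n-1}⁻¹` where `θ_m` is the unique root of `-1 + X + X^m` in `(0,1)`.
Then `β ≥ θ_n⁻¹ ≥ 1 + (log n)(1 - (log log n)/(log n))/n = 1 + (log n - log log n)/n`;
in particular the house of any algebraic integer of dynamical degree `n ≥ 260`
satisfies this lower bound. -/
theorem stmt_19 (n : ℕ) (hn : 260 ≤ n) (θn θn1 : ℝ)
    (hθn : θn ∈ Set.Ioo (0 : ℝ) 1) (hθnroot : -1 + θn + θn ^ n = 0)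
    (hθn1 : θn1 ∈ Set.Ioo (0 : ℝ) 1) (hθn1root : -1 + θn1 + θn1 ^ (n - 1) = 0)
    (β : ℝ) (hβ1 : θn⁻¹ ≤ β) (hβ2 : β < θn1⁻¹) :
    1 + (Real.log n - Real.log (Real.log n)) / n ≤ θn⁻¹ ∧ θn⁻¹ ≤ β := by
  refine ⟨?_, hβ1⟩
  have hn0 : (0:ℝ) < n := by positivity
  have hnn : (260:ℝ) ≤ n := by exact_mod_cast hn
  have hL1 : (1:ℝ) < Real.log n := by
    have hexp : Real.exp 1 < (n:ℝ) := lt_of_lt_of_le (by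
      have := Real.exp_one_lt_d9; linarith) hnn
    have := (Real.lt_log_iff_exp_lt hn0).mpr hexp
    linarith
  set L := Real.log (n:ℝ) with hLdef
  have hL0 : 0 < L := by linarith
  have hLL : Real.log L < L := by linarith [Real.log_le_sub_one_of_pos hL0]
  have hLL0 : 0 ≤ Real.log L := Real.log_nonneg (le_of_lt hL1)
  set c : ℝ := (L - Real.log L) / n with hcdef
  have hc0 : 0 < c := by
    apply div_pos _ hn0; linarith
  have h1c : (0:ℝ) < 1 + c := by linarith
  have hnc : (n:ℝ) * c = L - Real.log L := by
    rw [hcdef]; field_simp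
  -- key : (1+c)^n ≤ n / L
  have hkey : (1+c)^n ≤ (n:ℝ) / L := by
    have h1 : (1+c)^n ≤ Real.exp c ^ n :=
      pow_le_pow_left₀ (by linarith) (by linarith [Real.add_one_le_exp c]) n
    have h2 : Real.exp c ^ n = Real.exp ((n:ℝ) * c) := by
      rw [← Real.exp_nat_mul]
    have h3 : Real.exp ((n:ℝ) * c) = (n:ℝ) / L := by
      rw [hnc, Real.exp_sub, Real.exp_log hn0, Real.exp_log hL0]
    rw [h2, h3] at h1; exact h1
  have hkey2 : c * (1+c)^n ≤ 1 := by
    have h4 : c * (1+c)^n ≤ c * ((n:ℝ)/L) :=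
      mul_le_mul_of_nonneg_left hkey (le_of_lt hc0)
    have h5 : c * ((n:ℝ)/L) ≤ 1 := by
      rw [hcdef]
      rw [div_mul_div_comm, div_le_one (by positivity)]
      nlinarith
    linarith
  set P : ℝ := (1+c)^(n-1) with hPdef
  have hP : 0 < P := by positivity
  have hpow : (1+c)^n = P * (1+c) := by
    rw [hPdef, ← pow_succ]; congr 1; omega
  have hcP : c * P ≤ 1 := by
    have : P ≤ (1+c)^n := by
      rw [hpow]; nlinarith
    nlinarith
  -- -1 + t + t^n ≥ 0 for t = (1+c)⁻¹
  have ht0 : (0:ℝ) < (1+c)⁻¹ := by positivity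
  have hroot : (0:ℝ) ≤ -1 + (1+c)⁻¹ + ((1+c)⁻¹)^n := by
    have hg : (1:ℝ) ≤ (1+c)⁻¹ + ((1+c)^n)⁻¹ := by
      rw [hpow, inv_eq_one_div, inv_eq_one_div,
        div_add_div _ _ (ne_of_gt h1c) (by positivity),
        le_div_iff₀ (by positivity)]
      nlinarith
    rw [inv_pow]; linarith
  have hθt : θn ≤ (1+c)⁻¹ := by
    by_contra hcon
    push_neg at hcon
    have hlt : ((1+c)⁻¹)^n < θn ^ n :=
      pow_lt_pow_left₀ hcon (le_of_lt ht0) (by omega)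
    linarith
  have hfin : ((1+c)⁻¹)⁻¹ ≤ θn⁻¹ := inv_anti₀ hθn.1 hθt
  rw [inv_inv] at hfin
  exact hfin
end
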